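/- For every n ≥ 1, the connectedness locus of S_n, namely the set C = {(a,b) ∈ S_n : the forward orbit of −a under P_{a,b} is bounded}, is a compact subset of ℂ². -/

import Mathlib

open Function Metric Bornology Set

/-- The monic centered cubic polynomial `P_{a,b}(z) = z^3 - 3 a^2 z + b`. -/
noncomputable def cubicP (a b z : ℂ) : ℂ := z ^ 3 - 3 * a ^ 2 * z + b

/-- `z` has exact (minimal) period `n` under `f`. -/
def HasExactPeriod (f : ℂ → ℂ) (n : ℕ) (z : ℂ) : Prop :=
  f^[n] z = z ∧ ∀ k, 1 ≤ k → k < n → f^[k] z ≠ z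

/-- The curve `S_n` of parameters for which the critical point `a` has exact period `n`. -/
def Scurve (n : ℕ) : Set (ℂ × ℂ) :=
  {p | HasExactPeriod (cubicP p.1 p.2) n p.1}

lemma cubic_escape (a b z : ℂ) (h1 : 1 ≤ ‖z‖) (h2 : 3*‖a‖^2 + ‖b‖ + 2 ≤ ‖z‖^2) :
    2*‖z‖ ≤ ‖cubicP a b z‖ := by
  have key : ‖z^3‖ - ‖3*a^2*z‖ - ‖b‖ ≤ ‖cubicP a b z‖ := by
    calc ‖z^3‖ - ‖3*a^2*z‖ - ‖b‖ ≤ ‖z^3 - 3*a^2*z‖ - ‖b‖ := by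
          have := norm_sub_norm_le (z^3) (3*a^2*z); linarith
      _ ≤ ‖z^3 - 3*a^2*z + b‖ := by
          have h := norm_sub_le (z^3 - 3*a^2*z + b) b
          have e : z^3 - 3*a^2*z + b - b = z^3 - 3*a^2*z := by ring
          rw [e] at h; linarith
      _ = ‖cubicP a b z‖ := rfl
  have e1 : ‖z^3‖ = ‖z‖^3 := by rw [norm_pow]
  have e2 : ‖3*a^2*z‖ = 3*‖a‖^2*‖z‖ := by
    rw [norm_mul, norm_mul, norm_pow]; norm_num
  rw [e1, e2] at key
  nlinarith [norm_nonneg z, norm_nonneg a, norm_nonneg b]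

lemma cubic_iter_escape (a b z : ℂ) (h1 : 1 ≤ ‖z‖) (h2 : 3*‖a‖^2 + ‖b‖ + 2 ≤ ‖z‖^2) :
    ∀ m : ℕ, 1 ≤ ‖(cubicP a b)^[m] z‖ ∧ 3*‖a‖^2 + ‖b‖ + 2 ≤ ‖(cubicP a b)^[m] z‖^2
      ∧ 2^m * ‖z‖ ≤ ‖(cubicP a b)^[m] z‖ := by
  intro m
  induction m with
  | zero => simpa using ⟨h1, h2⟩
  | succ k ih =>
    obtain ⟨i1, i2, i3⟩ := ih
    set w := (cubicP a b)^[k] z with hw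
    have hesc := cubic_escape a b w i1 i2
    have hsucc : (cubicP a b)^[k+1] z = cubicP a b w := by
      rw [Function.iterate_succ_apply']
    rw [hsucc]
    refine ⟨by nlinarith [norm_nonneg w], by nlinarith [norm_nonneg w], ?_⟩
    have : 2^(k+1) * ‖z‖ = 2 * (2^k * ‖z‖) := by ring
    rw [this]
    nlinarith [norm_nonneg w]

lemma bounded_orbit_sq_lt (a b z : ℂ)
    (h : IsBounded (Set.range fun m : ℕ => (cubicP a b)^[m] z)) :
    ‖z‖^2 < 3*‖a‖^2 + ‖b‖ + 2 := by
  by_contra hc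
  push_neg at hc
  have h1 : 1 ≤ ‖z‖ := by nlinarith [norm_nonneg z, norm_nonneg a, norm_nonneg b]
  obtain ⟨C, hC⟩ := isBounded_iff_forall_norm_le.1 h
  have hC' : ∀ m : ℕ, ‖(cubicP a b)^[m] z‖ ≤ C := fun m => hC _ ⟨m, rfl⟩
  obtain ⟨M, hM⟩ := pow_unbounded_of_one_lt (C : ℝ) (by norm_num : (1:ℝ) < 2)
  have := (cubic_iter_escape a b z h1 hc M).2.2
  have hz := hC' M
  nlinarith [pow_pos (by norm_num : (0:ℝ) < 2) M]

lemma tail_bounded {f : ℂ → ℂ} {z : ℂ} (j : ℕ)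
    (h : IsBounded (Set.range fun m : ℕ => f^[m] z)) :
    IsBounded (Set.range fun m : ℕ => f^[m] (f^[j] z)) := by
  refine h.subset ?_
  rintro x ⟨m, rfl⟩
  exact ⟨m + j, by simp [Function.iterate_add_apply]⟩

lemma periodic_orbit_bounded {f : ℂ → ℂ} {z : ℂ} {n : ℕ} (hn : 1 ≤ n) (hfix : f^[n] z = z) :
    IsBounded (Set.range fun m : ℕ => f^[m] z) := by
  have hfin : ((fun k : ℕ => f^[k] z) '' (Set.Iio n)).Finite :=
    (Set.finite_Iio n).image _
  refine hfin.isBounded.subset ?_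
  rintro x ⟨m, rfl⟩
  refine ⟨m % n, Nat.mod_lt _ hn, ?_⟩
  show f^[m % n] z = f^[m] z
  conv_rhs => rw [← Nat.mod_add_div m n]
  rw [Function.iterate_add_apply, Function.iterate_mul]
  congr 1
  exact (Function.IsFixedPt.iterate (show Function.IsFixedPt f^[n] z from hfix) (m / n)).symm

lemma param_bound {a b : ℂ} {n : ℕ} (hn : 1 ≤ n) (hper : (cubicP a b)^[n] a = a)
    (hb : IsBounded (Set.range fun m : ℕ => (cubicP a b)^[m] (-a))) :
    ‖a‖ ≤ 2 ∧ ‖b‖ ≤ 5 ∧ ∀ m : ℕ, ‖(cubicP a b)^[m] (-a)‖ ≤ 5 := by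
  have hba : IsBounded (Set.range fun m : ℕ => (cubicP a b)^[m] a) :=
    periodic_orbit_bounded hn hper
  have hu : ‖b - 2*a^3‖^2 < 3*‖a‖^2 + ‖b‖ + 2 := by
    have := bounded_orbit_sq_lt a b (cubicP a b a) (by
      have := tail_bounded (f := cubicP a b) 1 hba
      simpa using this)
    have e : cubicP a b a = b - 2*a^3 := by unfold cubicP; ring
    rwa [e] at this
  have hv : ‖b + 2*a^3‖^2 < 3*‖a‖^2 + ‖b‖ + 2 := by
    have := bounded_orbit_sq_lt a b (cubicP a b (-a)) (by
      have := tail_bounded (f := cubicP a b) 1 hb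
      simpa using this)
    have e : cubicP a b (-a) = b + 2*a^3 := by unfold cubicP; ring
    rwa [e] at this
  have h4 : 4*‖a‖^3 ≤ ‖b + 2*a^3‖ + ‖b - 2*a^3‖ := by
    have e : (4:ℂ)*a^3 = (b + 2*a^3) - (b - 2*a^3) := by ring
    have := norm_sub_le (b + 2*a^3) (b - 2*a^3)
    rw [← e] at this
    have e2 : ‖(4:ℂ)*a^3‖ = 4*‖a‖^3 := by rw [norm_mul, norm_pow]; norm_num
    linarith [e2 ▸ this]
  have h2b : 2*‖b‖ ≤ ‖b + 2*a^3‖ + ‖b - 2*a^3‖ := by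
    have e : (2:ℂ)*b = (b + 2*a^3) + (b - 2*a^3) := by ring
    have := norm_add_le (b + 2*a^3) (b - 2*a^3)
    rw [← e] at this
    have e2 : ‖(2:ℂ)*b‖ = 2*‖b‖ := by rw [norm_mul]; norm_num
    linarith [e2 ▸ this]
  set A := ‖a‖ with hA
  set B := ‖b‖ with hB
  set u := ‖b - 2*a^3‖
  set v := ‖b + 2*a^3‖
  have hA0 : 0 ≤ A := norm_nonneg a
  have hB0 : 0 ≤ B := norm_nonneg b
  have hu0 : 0 ≤ u := norm_nonneg _
  have hv0 : 0 ≤ v := norm_nonneg _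
  have h4' : (4*A^3)^2 ≤ (v + u)^2 := pow_le_pow_left₀ (by positivity) h4 2
  have h2b' : (2*B)^2 ≤ (v + u)^2 := pow_le_pow_left₀ (by positivity) h2b 2
  have key1 : 4*A^6 < 3*A^2 + B + 2 := by nlinarith [sq_nonneg (u - v)]
  have key2 : B^2 < 3*A^2 + B + 2 := by nlinarith [sq_nonneg (u - v)]
  have hA2 : A ≤ 2 := by
    by_contra hc
    push_neg at hc
    nlinarith [pow_pos (lt_trans (by norm_num) hc : (0:ℝ) < A) 6,
      sq_nonneg (B - 1), sq_nonneg (A^3 - A), sq_nonneg (A^2 - 4)]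
  have hB5 : B ≤ 5 := by nlinarith
  refine ⟨hA2, hB5, fun m => ?_⟩
  have := bounded_orbit_sq_lt a b ((cubicP a b)^[m] (-a)) (by
    have := tail_bounded (f := cubicP a b) m hb
    simpa using this)
  nlinarith [norm_nonneg ((cubicP a b)^[m] (-a))]

lemma continuous_cubic_iter (k : ℕ) :
    Continuous fun q : (ℂ × ℂ) × ℂ => (cubicP q.1.1 q.1.2)^[k] q.2 := by
  induction k with
  | zero => simpa using continuous_snd
  | succ j ih =>
    have e : (fun q : (ℂ × ℂ) × ℂ => (cubicP q.1.1 q.1.2)^[j+1] q.2)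
        = fun q => ((cubicP q.1.1 q.1.2)^[j] q.2)^3
            - 3*q.1.1^2*((cubicP q.1.1 q.1.2)^[j] q.2) + q.1.2 := by
      funext q; rw [Function.iterate_succ_apply']; rfl
    rw [e]
    exact ((ih.pow 3).sub ((continuous_const.mul (continuous_fst.fst.pow 2)).mul ih)).add
      continuous_fst.snd

noncomputable def cubicD (a b z : ℂ) (k : ℕ) : ℂ :=
  ∏ i ∈ Finset.range k, (3 * ((cubicP a b)^[i] z)^2 - 3 * a^2)

lemma continuous_cubicD (k : ℕ) :
    Continuous fun q : (ℂ × ℂ) × ℂ => cubicD q.1.1 q.1.2 q.2 k := by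
  unfold cubicD
  apply continuous_finset_prod
  intro i _
  exact (continuous_const.mul ((continuous_cubic_iter i).pow 2)).sub
    (continuous_const.mul (continuous_fst.fst.pow 2))

lemma hasDerivAt_cubicP (a b z : ℂ) : HasDerivAt (cubicP a b) (3*z^2 - 3*a^2) z := by
  have h1 := hasDerivAt_pow 3 z
  have h2 := (hasDerivAt_id z).const_mul (3*a^2)
  have h := (h1.sub h2).add_const b
  have e : cubicP a b = fun x => (((fun x : ℂ => x ^ 3) - fun y : ℂ => 3 * a ^ 2 * id y) : ℂ → ℂ) x + b := by
    funext w; rfl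
  rw [e]; refine h.congr_deriv ?_
  push_cast; ring

lemma hasDerivAt_iter (a b z : ℂ) (k : ℕ) :
    HasDerivAt ((cubicP a b)^[k]) (cubicD a b z k) z := by
  induction k with
  | zero => simpa [cubicD] using hasDerivAt_id z
  | succ j ih =>
    have hcomp := (hasDerivAt_cubicP a b ((cubicP a b)^[j] z)).comp z ih
    have e : (cubicP a b)^[j+1] = cubicP a b ∘ (cubicP a b)^[j] :=
      Function.iterate_succ' _ _
    rw [e]
    have e2 : cubicD a b z (j+1)
        = (3 * ((cubicP a b)^[j] z)^2 - 3*a^2) * cubicD a b z j := by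
      simp [cubicD, Finset.prod_range_succ, mul_comm]
    rw [e2]
    exact hcomp

lemma cubicD_self_eq_zero (a b : ℂ) {k : ℕ} (hk : 1 ≤ k) : cubicD a b a k = 0 := by
  unfold cubicD
  apply Finset.prod_eq_zero (Finset.mem_range.2 hk)
  simp

/-- Local contraction near a superattracting cycle: if `a` has minimal period `m` under
`cubicP a b`, then nearby parameters cannot have a point near `a` of exact period a proper
multiple of `m`. -/
lemma limit_no_period_drop {p : ℂ × ℂ} {n : ℕ} (hn : 1 ≤ n)
    (x : ℕ → ℂ × ℂ) (hx : ∀ k, HasExactPeriod (cubicP (x k).1 (x k).2) n (x k).1)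
    (hlim : Filter.Tendsto x Filter.atTop (nhds p))
    (hfix : (cubicP p.1 p.2)^[n] p.1 = p.1) :
    HasExactPeriod (cubicP p.1 p.2) n p.1 := by
  set f := cubicP p.1 p.2 with hf
  have hnper : Function.IsPeriodicPt f n p.1 := hfix
  have hn0 : 0 < n := hn
  set m := Function.minimalPeriod f p.1 with hm
  have hm1 : 0 < m := Function.IsPeriodicPt.minimalPeriod_pos hn0 hnper
  have hmdvd : m ∣ n := Function.IsPeriodicPt.minimalPeriod_dvd hnper
  have hmeq : m = n := by
    by_contra hne
    have hlt : m < n := lt_of_le_of_ne (Nat.le_of_dvd hn0 hmdvd) hne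
    -- derivative of f^[m] at p.1 is 0
    have hD0 : cubicD p.1 p.2 p.1 m = 0 := cubicD_self_eq_zero _ _ hm1
    -- find ε such that the derivative is ≤ 1/2 nearby
    have hcont := (continuous_cubicD m).tendsto (p, p.1)
    rw [show cubicD (p, p.1).1.1 (p, p.1).1.2 (p, p.1).2 m = 0 from hD0] at hcont
    have hev : ∀ᶠ q : (ℂ × ℂ) × ℂ in nhds (p, p.1),
        ‖cubicD q.1.1 q.1.2 q.2 m‖ < 1/2 := by
      have := hcont (Metric.ball_mem_nhds (0:ℂ) (by norm_num : (0:ℝ) < 1/2))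
      filter_upwards [this] with q hq
      simpa [mem_ball_zero_iff] using hq
    obtain ⟨ε, hε, hεball⟩ := Metric.eventually_nhds_iff_ball.1 hev
    set δ := ε / 2 with hδ
    have hδpos : 0 < δ := by positivity
    -- f^[m] p.1 = p.1
    have hmfix : f^[m] p.1 = p.1 := Function.iterate_minimalPeriod
    -- for q near p, (cubicP q)^[m] p.1 is close to p.1
    have hΨcont : Continuous fun q : ℂ × ℂ => (cubicP q.1 q.2)^[m] p.1 := by
      have e : (fun q : ℂ × ℂ => (cubicP q.1 q.2)^[m] p.1)
          = (fun q : (ℂ × ℂ) × ℂ => (cubicP q.1.1 q.1.2)^[m] q.2)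
            ∘ (fun q : ℂ × ℂ => (q, p.1)) := by funext q; rfl
      rw [e]
      exact (continuous_cubic_iter m).comp (continuous_id.prodMk continuous_const)
    have hev2 : ∀ᶠ q : ℂ × ℂ in nhds p,
        ‖(cubicP q.1 q.2)^[m] p.1 - p.1‖ < δ/2 := by
      have ht : Filter.Tendsto (fun q : ℂ × ℂ => ‖(cubicP q.1 q.2)^[m] p.1 - p.1‖)
          (nhds p) (nhds ‖(cubicP p.1 p.2)^[m] p.1 - p.1‖) :=
        ((hΨcont.sub continuous_const).norm).tendsto p
      rw [show (cubicP p.1 p.2)^[m] p.1 = p.1 from hmfix, sub_self, norm_zero] at ht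
      exact ht.eventually_lt_const (by positivity)
    obtain ⟨ε2, hε2, hball2⟩ := Metric.eventually_nhds_iff_ball.1 hev2
    -- choose K with x K close to p
    have hsmall : (0:ℝ) < min (min (ε/2) ε2) δ := by positivity
    have hKex : ∃ K, dist (x K) p < min (min (ε/2) ε2) δ :=
      (Metric.tendsto_atTop.1 hlim _ hsmall).imp fun K hK => hK K le_rfl
    obtain ⟨K, hK⟩ := hKex
    set q := x K with hq
    have hqp1 : dist q p < ε/2 := lt_of_lt_of_le hK (le_trans (min_le_left _ _) (min_le_left _ _))
    have hqp2 : dist q p < ε2 := lt_of_lt_of_le hK (le_trans (min_le_left _ _) (min_le_right _ _))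
    have hqp3 : dist q p < δ := lt_of_lt_of_le hK (min_le_right _ _)
    set B := Metric.closedBall p.1 δ with hB
    set h := (cubicP q.1 q.2)^[m] with hh
    have hαB : q.1 ∈ B := by
      have : dist q.1 p.1 ≤ dist q p := by
        rw [Prod.dist_eq]; exact le_max_left _ _
      exact Metric.mem_closedBall.2 (le_trans this (le_of_lt hqp3))
    have hp1B : p.1 ∈ B := Metric.mem_closedBall_self (le_of_lt hδpos)
    -- Lipschitz 1/2 on B
    have hLip : ∀ z ∈ B, ∀ y ∈ B, ‖h y - h z‖ ≤ 1/2 * ‖y - z‖ := by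
      intro z hz y hy
      refine Convex.norm_image_sub_le_of_norm_hasDerivWithin_le
        (f' := fun w => cubicD q.1 q.2 w m)
        (fun w hw => (hasDerivAt_iter q.1 q.2 w m).hasDerivWithinAt) ?_
        (convex_closedBall _ _) hz hy
      intro w hw
      refine le_of_lt (hεball (q, w) ?_)
      rw [Metric.mem_ball, Prod.dist_eq]
      refine max_lt (lt_trans hqp1 (by linarith)) ?_
      calc dist w p.1 ≤ δ := Metric.mem_closedBall.1 hw
        _ < ε := by rw [hδ]; linarith
    -- h maps B into B
    have hmaps : ∀ z ∈ B, h z ∈ B := by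
      intro z hz
      have h1 : ‖h z - h p.1‖ ≤ 1/2 * ‖z - p.1‖ := hLip p.1 hp1B z hz
      have h2 : ‖h p.1 - p.1‖ < δ/2 := hball2 q (Metric.mem_ball.2 hqp2)
      have h3 : ‖z - p.1‖ ≤ δ := by
        rw [← dist_eq_norm]; exact Metric.mem_closedBall.1 hz
      have : ‖h z - p.1‖ ≤ ‖h z - h p.1‖ + ‖h p.1 - p.1‖ := norm_sub_le_norm_sub_add_norm_sub _ _ _
      rw [Metric.mem_closedBall, dist_eq_norm]
      linarith
    -- the quotient s
    set s := n / m with hs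
    have hs1 : 1 ≤ s := Nat.div_pos (Nat.le_of_dvd hn0 hmdvd) hm1
    have hms : m * s = n := Nat.mul_div_cancel' hmdvd
    have hiter : (cubicP q.1 q.2)^[n] = h^[s] := by
      rw [hh, ← Function.iterate_mul, hms]
    have hgα : h^[s] q.1 = q.1 := by rw [← hiter]; exact (hx K).1
    set c := h q.1 with hc
    have hcB : c ∈ B := hmaps q.1 hαB
    have hgc : h^[s] c = c := by
      rw [hc, ← Function.iterate_succ_apply, Function.iterate_succ_apply', hgα]
    -- contraction estimate
    have claim : ∀ j : ℕ, h^[j] c ∈ B ∧ h^[j] q.1 ∈ B ∧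
        ‖h^[j] c - h^[j] q.1‖ ≤ (1/2)^j * ‖c - q.1‖ := by
      intro j
      induction j with
      | zero => exact ⟨by simpa using hcB, by simpa using hαB, by simp⟩
      | succ i ih =>
        obtain ⟨i1, i2, i3⟩ := ih
        refine ⟨by rw [Function.iterate_succ_apply']; exact hmaps _ i1,
          by rw [Function.iterate_succ_apply']; exact hmaps _ i2, ?_⟩
        rw [Function.iterate_succ_apply', Function.iterate_succ_apply']
        calc ‖h (h^[i] c) - h (h^[i] q.1)‖ ≤ 1/2 * ‖h^[i] c - h^[i] q.1‖ :=
              hLip _ i2 _ i1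
          _ ≤ 1/2 * ((1/2)^i * ‖c - q.1‖) := by
              have : (0:ℝ) ≤ 1/2 := by norm_num
              nlinarith
          _ = (1/2)^(i+1) * ‖c - q.1‖ := by ring
    have hfinal := (claim s).2.2
    rw [hgc, hgα] at hfinal
    have hpow : ((1:ℝ)/2)^s ≤ 1/2 := by
      calc ((1:ℝ)/2)^s ≤ (1/2)^1 := by
            apply pow_le_pow_of_le_one (by norm_num) (by norm_num) hs1
        _ = 1/2 := pow_one _
    have hzero : ‖c - q.1‖ = 0 := by
      have hnn : 0 ≤ ‖c - q.1‖ := norm_nonneg _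
      nlinarith
    have hceq : c = q.1 := by
      rwa [← sub_eq_zero, ← norm_eq_zero]
    exact (hx K).2 m hm1 hlt hceq
  -- conclude
  refine ⟨hfix, fun k hk1 hkn hkfix => ?_⟩
  have : m ≤ k := Function.IsPeriodicPt.minimalPeriod_le hk1 hkfix
  omega

theorem stmt_9 (n : ℕ) (hn : 1 ≤ n) :
    IsCompact {p : ℂ × ℂ | p ∈ Scurve n ∧
      Bornology.IsBounded (Set.range fun m : ℕ => (cubicP p.1 p.2)^[m] (-p.1))} := by
  set C := {p : ℂ × ℂ | p ∈ Scurve n ∧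
      Bornology.IsBounded (Set.range fun m : ℕ => (cubicP p.1 p.2)^[m] (-p.1))} with hC
  have hmem : ∀ p ∈ C, HasExactPeriod (cubicP p.1 p.2) n p.1 ∧
      Bornology.IsBounded (Set.range fun m : ℕ => (cubicP p.1 p.2)^[m] (-p.1)) := fun p hp => hp
  have hbd : ∀ p ∈ C, ‖p.1‖ ≤ 2 ∧ ‖p.2‖ ≤ 5 ∧
      ∀ m : ℕ, ‖(cubicP p.1 p.2)^[m] (-p.1)‖ ≤ 5 :=
    fun p hp => param_bound hn (hmem p hp).1.1 (hmem p hp).2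
  apply isCompact_of_isClosed_isBounded
  · -- closed
    apply IsSeqClosed.isClosed
    intro x p hx hlim
    -- (1) the fixed point equation passes to the limit
    have hfix : (cubicP p.1 p.2)^[n] p.1 = p.1 := by
      have hFc : Continuous fun q : ℂ × ℂ => (cubicP q.1 q.2)^[n] q.1 - q.1 := by
        have e : (fun q : ℂ × ℂ => (cubicP q.1 q.2)^[n] q.1)
            = (fun q : (ℂ × ℂ) × ℂ => (cubicP q.1.1 q.1.2)^[n] q.2)
              ∘ (fun q : ℂ × ℂ => (q, q.1)) := by funext q; rfl
        have h1 : Continuous fun q : ℂ × ℂ => (cubicP q.1 q.2)^[n] q.1 := by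
          rw [e]; exact (continuous_cubic_iter n).comp (continuous_id.prodMk continuous_fst)
        exact h1.sub continuous_fst
      have ht : Filter.Tendsto (fun k => (cubicP (x k).1 (x k).2)^[n] (x k).1 - (x k).1)
          Filter.atTop (nhds ((cubicP p.1 p.2)^[n] p.1 - p.1)) :=
        (hFc.tendsto p).comp hlim
      have hz : (fun k => (cubicP (x k).1 (x k).2)^[n] (x k).1 - (x k).1)
          = fun _ => (0 : ℂ) := by
        funext k; rw [(hmem _ (hx k)).1.1, sub_self]
      rw [hz] at ht
      have h0 : (0 : ℂ) = (cubicP p.1 p.2)^[n] p.1 - p.1 :=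
        tendsto_nhds_unique tendsto_const_nhds ht
      exact sub_eq_zero.1 h0.symm
    -- (2) the orbit bound passes to the limit
    have hub : ∀ m : ℕ, ‖(cubicP p.1 p.2)^[m] (-p.1)‖ ≤ 5 := by
      intro m
      have hGc : Continuous fun q : ℂ × ℂ => (cubicP q.1 q.2)^[m] (-q.1) := by
        have e : (fun q : ℂ × ℂ => (cubicP q.1 q.2)^[m] (-q.1))
            = (fun q : (ℂ × ℂ) × ℂ => (cubicP q.1.1 q.1.2)^[m] q.2)
              ∘ (fun q : ℂ × ℂ => (q, -q.1)) := by funext q; rfl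
        rw [e]
        exact (continuous_cubic_iter m).comp (continuous_id.prodMk continuous_fst.neg)
      have ht : Filter.Tendsto (fun k => ‖(cubicP (x k).1 (x k).2)^[m] (-(x k).1)‖)
          Filter.atTop (nhds ‖(cubicP p.1 p.2)^[m] (-p.1)‖) :=
        ((hGc.norm).tendsto p).comp hlim
      exact le_of_tendsto ht (Filter.Eventually.of_forall fun k => (hbd _ (hx k)).2.2 m)
    have hbound : Bornology.IsBounded (Set.range fun m : ℕ => (cubicP p.1 p.2)^[m] (-p.1)) := by
      refine isBounded_iff_forall_norm_le.2 ⟨5, ?_⟩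
      rintro _ ⟨m, rfl⟩
      exact hub m
    exact ⟨limit_no_period_drop hn x (fun k => (hmem _ (hx k)).1) hlim hfix, hbound⟩
  · -- bounded
    refine (Metric.isBounded_closedBall (x := (0 : ℂ × ℂ)) (r := 5)).subset ?_
    intro p hp
    obtain ⟨h1, h2, _⟩ := hbd p hp
    rw [mem_closedBall_zero_iff, Prod.norm_def]
    exact max_le (h1.trans (by norm_num)) h2
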